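/- Let 0 < T ≤ ∞ and let y, h : [0,T] → [0,∞) be continuous functions satisfying y'(t) ≤ c₁ y(t)² + c₂ + h(t) (in the sense of a differential inequality), with ∫₀ᵀ y(t) dt ≤ c₃ and ∫₀ᵀ h(t) dt ≤ c₄, for nonnegative constants c₁,...,c₄. Then for every r ∈ (0,T) and every t ∈ [0, T - r], y(t + r) ≤ (c₃/r + c₂ r + c₄) e^{c₁ c₃}. Moreover, if T = ∞ then y(t) → 0 as t → ∞. -/

import Mathlib

open MeasureTheory Filter
open scoped ENNReal

open Set intervalIntegral

/-- Pointwise Gronwall step: for s ∈ [a,b], y b ≤ (y s + c₂(b-a) + B) e^{c₁ A}. -/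
lemma gronwall_step (y y' h : ℝ → ℝ) (c₁ c₂ : ℝ) (a b A B : ℝ) (hab : a ≤ b)
    (hc₁ : 0 ≤ c₁) (hc₂ : 0 ≤ c₂) (hB : 0 ≤ B)
    (hycont : ContinuousOn y (Icc a b)) (hhcont : ContinuousOn h (Icc a b))
    (hynn : ∀ t ∈ Icc a b, 0 ≤ y t) (hhnn : ∀ t ∈ Icc a b, 0 ≤ h t)
    (hderiv : ∀ t ∈ Icc a b, HasDerivAt y (y' t) t)
    (hineq : ∀ t ∈ Icc a b, y' t ≤ c₁ * y t ^ 2 + c₂ + h t)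
    (hyint : ∫ t in a..b, y t ≤ A) (hhint : ∫ t in a..b, h t ≤ B)
    (s : ℝ) (hs : s ∈ Icc a b) :
    y b ≤ (y s + c₂ * (b - a) + B) * Real.exp (c₁ * A) := by
  obtain ⟨has, hsb⟩ := hs
  have hyi : ∀ u v, u ∈ Icc a b → v ∈ Icc a b → IntervalIntegrable y volume u v := by
    intro u v hu hv
    exact (hycont.mono (uIcc_subset_Icc hu hv)).intervalIntegrable
  have hhi : ∀ u v, u ∈ Icc a b → v ∈ Icc a b → IntervalIntegrable h volume u v := by
    intro u v hu hv
    exact (hhcont.mono (uIcc_subset_Icc hu hv)).intervalIntegrable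
  have hmem : ∀ u, u ∈ Icc s b → u ∈ Icc a b := fun u hu => ⟨has.trans hu.1, hu.2⟩
  -- key nonneg integrals
  have hA' : ∫ t in s..b, y t ≤ A := by
    have h1 : (0:ℝ) ≤ ∫ t in a..s, y t :=
      intervalIntegral.integral_nonneg has (fun u hu => hynn u ⟨hu.1, hu.2.trans hsb⟩)
    have h2 := intervalIntegral.integral_add_adjacent_intervals
      (hyi a s (left_mem_Icc.2 hab) ⟨has, hsb⟩) (hyi s b ⟨has, hsb⟩ (right_mem_Icc.2 hab))
    linarith
  have hB' : ∫ t in s..b, h t ≤ B := by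
    have h1 : (0:ℝ) ≤ ∫ t in a..s, h t :=
      intervalIntegral.integral_nonneg has (fun u hu => hhnn u ⟨hu.1, hu.2.trans hsb⟩)
    have h2 := intervalIntegral.integral_add_adjacent_intervals
      (hhi a s (left_mem_Icc.2 hab) ⟨has, hsb⟩) (hhi s b ⟨has, hsb⟩ (right_mem_Icc.2 hab))
    linarith
  have hAnn : 0 ≤ A := le_trans (intervalIntegral.integral_nonneg hsb
      (fun u hu => hynn u (hmem u hu))) hA'
  set G : ℝ → ℝ := fun u => ∫ τ in s..u, y τ with hG
  set z : ℝ → ℝ := fun u => y u * Real.exp (-(c₁ * G u)) - (c₂ * (u - s) + ∫ τ in s..u, h τ)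
    with hz
  -- continuity of G, H primitives on Icc s b
  have hGc : ContinuousOn G (Icc s b) := by
    have hint : IntegrableOn y (uIcc s b) volume := by
      rw [uIcc_of_le hsb]
      exact (hycont.mono (fun u hu => hmem u hu)).integrableOn_compact isCompact_Icc
    have := intervalIntegral.continuousOn_primitive_interval (μ := volume) hint
    rwa [uIcc_of_le hsb] at this
  have hHc : ContinuousOn (fun u => ∫ τ in s..u, h τ) (Icc s b) := by
    have hint : IntegrableOn h (uIcc s b) volume := by
      rw [uIcc_of_le hsb]
      exact (hhcont.mono (fun u hu => hmem u hu)).integrableOn_compact isCompact_Icc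
    have := intervalIntegral.continuousOn_primitive_interval (μ := volume) hint
    rwa [uIcc_of_le hsb] at this
  have hzc : ContinuousOn z (Icc s b) := by
    apply ContinuousOn.sub
    · exact ((hycont.mono hmem).mul ((Real.continuous_exp.comp_continuousOn
        ((continuous_const.continuousOn.mul hGc).neg))))
    · exact (continuous_const.mul (continuous_id.sub continuous_const)).continuousOn.add hHc
  -- derivative on interior
  have hzd : ∀ u ∈ Ioo s b, HasDerivAt z
      ((y' u - c₁ * y u * y u) * Real.exp (-(c₁ * G u)) - (c₂ + h u)) u := by
    intro u hu
    have huab : u ∈ Icc a b := hmem u ⟨hu.1.le, hu.2.le⟩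
    have huo : u ∈ Ioo a b := ⟨lt_of_le_of_lt has hu.1, hu.2⟩
    have hGd : HasDerivAt G (y u) u := by
      apply intervalIntegral.integral_hasDerivAt_right
        (hyi s u ⟨has, hsb⟩ huab)
        ((hycont.mono Ioo_subset_Icc_self).stronglyMeasurableAtFilter isOpen_Ioo u huo)
      exact (hycont u huab).continuousAt (Icc_mem_nhds huo.1 huo.2)
    have hHd : HasDerivAt (fun u => ∫ τ in s..u, h τ) (h u) u := by
      apply intervalIntegral.integral_hasDerivAt_right
        (hhi s u ⟨has, hsb⟩ huab)
        ((hhcont.mono Ioo_subset_Icc_self).stronglyMeasurableAtFilter isOpen_Ioo u huo)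
      exact (hhcont u huab).continuousAt (Icc_mem_nhds huo.1 huo.2)
    have hE : HasDerivAt (fun u => Real.exp (-(c₁ * G u)))
        (Real.exp (-(c₁ * G u)) * -(c₁ * y u)) u := by
      have := ((hGd.const_mul c₁).neg).exp
      simpa [mul_comm] using this
    have h1 : HasDerivAt (fun u => y u * Real.exp (-(c₁ * G u)))
        (y' u * Real.exp (-(c₁ * G u)) + y u * (Real.exp (-(c₁ * G u)) * -(c₁ * y u))) u :=
      (hderiv u huab).mul hE
    have h2 : HasDerivAt (fun u => c₂ * (u - s) + ∫ τ in s..u, h τ) (c₂ + h u) u := by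
      have : HasDerivAt (fun u : ℝ => c₂ * (u - s)) c₂ u := by
        simpa using ((hasDerivAt_id u).sub_const s).const_mul c₂
      exact this.add hHd
    have := h1.sub h2
    exact this.congr_deriv (by ring)
  have hanti : AntitoneOn z (Icc s b) := by
    apply antitoneOn_of_deriv_nonpos (convex_Icc s b) hzc
    · intro u hu
      rw [interior_Icc] at hu
      exact (hzd u hu).differentiableAt.differentiableWithinAt
    · intro u hu
      rw [interior_Icc] at hu
      rw [(hzd u hu).deriv]
      have huab : u ∈ Icc a b := hmem u ⟨hu.1.le, hu.2.le⟩
      have hGnn : 0 ≤ G u := intervalIntegral.integral_nonneg hu.1.le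
        (fun τ hτ => hynn τ (hmem τ ⟨hτ.1, hτ.2.trans hu.2.le⟩))
      have hexp1 : Real.exp (-(c₁ * G u)) ≤ 1 := by
        rw [Real.exp_le_one_iff]
        nlinarith
      have hexp0 : 0 < Real.exp (-(c₁ * G u)) := Real.exp_pos _
      have hkey : y' u - c₁ * y u * y u ≤ c₂ + h u := by
        have := hineq u huab
        nlinarith [sq_nonneg (y u)]
      have hch : 0 ≤ c₂ + h u := add_nonneg hc₂ (hhnn u huab)
      nlinarith
  have hzb := hanti (left_mem_Icc.2 hsb) (right_mem_Icc.2 hsb) hsb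
  have hzs : z s = y s := by simp [hz, hG]
  have hGb : G b ≤ A := hA'
  have hEb : Real.exp (c₁ * G b) ≤ Real.exp (c₁ * A) :=
    Real.exp_le_exp.2 (by nlinarith)
  -- from z b ≤ z s
  have key : y b * Real.exp (-(c₁ * G b)) ≤ y s + c₂ * (b - a) + B := by
    rw [hzs] at hzb
    have : c₂ * (b - s) ≤ c₂ * (b - a) := by nlinarith
    have hzbv : z b = y b * Real.exp (-(c₁ * G b)) - (c₂ * (b - s) + ∫ τ in s..b, h τ) := rfl
    rw [hzbv] at hzb
    linarith
  have hEpos : 0 < Real.exp (-(c₁ * G b)) := Real.exp_pos _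
  have hyb : 0 ≤ y b := hynn b (right_mem_Icc.2 hab)
  calc y b = y b * Real.exp (-(c₁ * G b)) * Real.exp (c₁ * G b) := by
        rw [mul_assoc, ← Real.exp_add]; simp
    _ ≤ (y s + c₂ * (b - a) + B) * Real.exp (c₁ * G b) := by
        apply mul_le_mul_of_nonneg_right key (Real.exp_pos _).le
    _ ≤ (y s + c₂ * (b - a) + B) * Real.exp (c₁ * A) := by
        apply mul_le_mul_of_nonneg_left hEb
        have := hynn s ⟨has, hsb⟩
        nlinarith

/-- Window Gronwall lemma. -/
lemma gronwall_window (y y' h : ℝ → ℝ) (c₁ c₂ : ℝ) (a b A B : ℝ) (hab : a < b)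
    (hc₁ : 0 ≤ c₁) (hc₂ : 0 ≤ c₂) (hB : 0 ≤ B)
    (hycont : ContinuousOn y (Icc a b)) (hhcont : ContinuousOn h (Icc a b))
    (hynn : ∀ t ∈ Icc a b, 0 ≤ y t) (hhnn : ∀ t ∈ Icc a b, 0 ≤ h t)
    (hderiv : ∀ t ∈ Icc a b, HasDerivAt y (y' t) t)
    (hineq : ∀ t ∈ Icc a b, y' t ≤ c₁ * y t ^ 2 + c₂ + h t)
    (hyint : ∫ t in a..b, y t ≤ A) (hhint : ∫ t in a..b, h t ≤ B) :
    y b ≤ (A / (b - a) + c₂ * (b - a) + B) * Real.exp (c₁ * A) := by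
  set C : ℝ := c₂ * (b - a) + B with hC
  set E : ℝ := Real.exp (c₁ * A) with hE
  have hEpos : 0 < E := Real.exp_pos _
  have hstep : ∀ s ∈ Icc a b, y b ≤ (y s + C) * E := fun s hs => by
    have := gronwall_step y y' h c₁ c₂ a b A B hab.le hc₁ hc₂ hB hycont hhcont hynn hhnn
      hderiv hineq hyint hhint s hs
    refine this.trans_eq ?_
    rw [hC, hE]; ring
  have hyi : IntervalIntegrable y volume a b := hycont.intervalIntegrable_of_Icc hab.le
  have hφi : IntervalIntegrable (fun s => (y s + C) * E) volume a b :=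
    (((hycont.add continuousOn_const).mul continuousOn_const)).intervalIntegrable_of_Icc hab.le
  have hmono := intervalIntegral.integral_mono_on hab.le
    (_root_.intervalIntegrable_const (c := y b)) hφi hstep
  rw [intervalIntegral.integral_const] at hmono
  have hφ : ∫ s in a..b, (y s + C) * E = ((∫ s in a..b, y s) + C * (b - a)) * E := by
    rw [intervalIntegral.integral_mul_const, intervalIntegral.integral_add hyi
      _root_.intervalIntegrable_const, intervalIntegral.integral_const, smul_eq_mul]
    ring
  rw [hφ] at hmono
  have hba : 0 < b - a := by linarith
  rw [smul_eq_mul] at hmono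
  have h2 : (b - a) * y b ≤ (A + C * (b - a)) * E := by
    have : ((∫ s in a..b, y s) + C * (b - a)) * E ≤ (A + C * (b - a)) * E := by
      apply mul_le_mul_of_nonneg_right _ hEpos.le
      linarith
    linarith
  have heq : (A / (b - a) + c₂ * (b - a) + B) * E = ((A + C * (b - a)) * E) / (b - a) := by
    have hcc : A / (b - a) * (b - a) = A := div_mul_cancel₀ A hba.ne'
    rw [hC, eq_div_iff hba.ne']
    linear_combination E * hcc
  rw [heq, le_div_iff₀ hba]
  nlinarith [h2, mul_comm (y b) (b - a)]

/-- Conversion from lintegral bound to interval integral bound. -/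
lemma lintegral_to_interval (f : ℝ → ℝ) (a b c : ℝ) (hab : a ≤ b) (hc : 0 ≤ c)
    (hfc : ContinuousOn f (Icc a b)) (hfnn : ∀ t ∈ Icc a b, 0 ≤ f t)
    (hint : ∫⁻ t in Set.Ioc a b, ENNReal.ofReal (f t) ≤ ENNReal.ofReal c) :
    ∫ t in a..b, f t ≤ c := by
  have hi : IntegrableOn f (Set.Ioc a b) volume :=
    (hfc.integrableOn_compact isCompact_Icc).mono_set Ioc_subset_Icc_self
  have heq : ENNReal.ofReal (∫ t in Set.Ioc a b, f t) = ∫⁻ t in Set.Ioc a b,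
      ENNReal.ofReal (f t) := by
    apply MeasureTheory.ofReal_integral_eq_lintegral_ofReal hi
    filter_upwards [ae_restrict_mem measurableSet_Ioc] with t ht
    exact hfnn t (Ioc_subset_Icc_self ht)
  rw [intervalIntegral.integral_of_le hab]
  have := heq ▸ hint
  rwa [ENNReal.ofReal_le_ofReal_iff hc] at this


lemma tail_small (f : ℝ → ℝ≥0∞) (hf : ∫⁻ t in Set.Ici (0:ℝ), f t ≠ ⊤)
    (δ : ℝ≥0∞) (hδ : 0 < δ) :
    ∃ M : ℝ, 0 ≤ M ∧ ∫⁻ t in Set.Ici M ∩ Set.Ici (0:ℝ), f t < δ := by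
  set μ : Measure ℝ := (volume.restrict (Set.Ici (0:ℝ))).withDensity f with hμ
  have happ : ∀ s : Set ℝ, MeasurableSet s → μ s = ∫⁻ t in s ∩ Set.Ici (0:ℝ), f t := by
    intro s hs
    rw [hμ, withDensity_apply f hs, Measure.restrict_restrict hs]
  have hfin : μ (Set.Ici (0:ℝ)) ≠ ⊤ := by
    rw [happ _ measurableSet_Ici]
    simpa using hf
  have hinter : ⋂ n : ℕ, Set.Ici ((n:ℝ)) = ∅ := by
    ext x
    simp only [Set.mem_iInter, Set.mem_Ici, Set.mem_empty_iff_false, iff_false, not_forall,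
      not_le]
    obtain ⟨n, hn⟩ := exists_nat_gt x
    exact ⟨n, hn⟩
  have htendsto : Tendsto (fun n : ℕ => μ (Set.Ici ((n:ℝ)))) atTop (nhds 0) := by
    have := MeasureTheory.tendsto_measure_iInter_atTop (μ := μ)
      (s := fun n : ℕ => Set.Ici ((n:ℝ)))
      (fun n => measurableSet_Ici.nullMeasurableSet)
      (fun m n hmn => Set.Ici_subset_Ici.2 (by exact_mod_cast hmn))
      ⟨0, by simpa using hfin⟩
    rw [hinter] at this
    simpa [Function.comp_def] using this
  have := (htendsto.eventually_lt_const hδ).exists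
  obtain ⟨n, hn⟩ := this
  refine ⟨n, Nat.cast_nonneg n, ?_⟩
  rw [happ _ measurableSet_Ici] at hn
  exact hn

theorem uniform_gronwall (T : ℝ≥0∞) (hT : 0 < T)
    (y y' h : ℝ → ℝ) (c₁ c₂ c₃ c₄ : ℝ)
    (hc₁ : 0 ≤ c₁) (hc₂ : 0 ≤ c₂) (hc₃ : 0 ≤ c₃) (hc₄ : 0 ≤ c₄)
    (hycont : ContinuousOn y {t : ℝ | 0 ≤ t ∧ ENNReal.ofReal t ≤ T})
    (hhcont : ContinuousOn h {t : ℝ | 0 ≤ t ∧ ENNReal.ofReal t ≤ T})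
    (hynn : ∀ t, 0 ≤ t → ENNReal.ofReal t ≤ T → 0 ≤ y t)
    (hhnn : ∀ t, 0 ≤ t → ENNReal.ofReal t ≤ T → 0 ≤ h t)
    (hderiv : ∀ t, 0 ≤ t → ENNReal.ofReal t ≤ T → HasDerivAt y (y' t) t)
    (hineq : ∀ t, 0 ≤ t → ENNReal.ofReal t ≤ T → y' t ≤ c₁ * y t ^ 2 + c₂ + h t)
    (hyint : ∫⁻ t in {t : ℝ | 0 ≤ t ∧ ENNReal.ofReal t ≤ T}, ENNReal.ofReal (y t)
        ≤ ENNReal.ofReal c₃)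
    (hhint : ∫⁻ t in {t : ℝ | 0 ≤ t ∧ ENNReal.ofReal t ≤ T}, ENNReal.ofReal (h t)
        ≤ ENNReal.ofReal c₄) :
    (∀ r : ℝ, 0 < r → ENNReal.ofReal r < T →
      ∀ t : ℝ, 0 ≤ t → ENNReal.ofReal (t + r) ≤ T →
        y (t + r) ≤ (c₃ / r + c₂ * r + c₄) * Real.exp (c₁ * c₃))
    ∧ (T = ⊤ → Tendsto y atTop (nhds 0)) := by
  set S : Set ℝ := {t : ℝ | 0 ≤ t ∧ ENNReal.ofReal t ≤ T} with hS
  constructor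
  · intro r hr hrT t ht htr
    have hsub : Set.Icc t (t + r) ⊆ S := by
      intro u hu
      exact ⟨le_trans ht hu.1, le_trans (ENNReal.ofReal_le_ofReal hu.2) htr⟩
    have hIoc : Set.Ioc t (t + r) ⊆ S := fun u hu => hsub (Set.Ioc_subset_Icc_self hu)
    have htt : t ≤ t + r := by linarith
    have hyw : ∫ u in t..(t+r), y u ≤ c₃ :=
      lintegral_to_interval y t (t+r) c₃ htt hc₃
        (hycont.mono hsub) (fun u hu => hynn u (hsub hu).1 (hsub hu).2)
        (le_trans (lintegral_mono_set hIoc) hyint)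
    have hhw : ∫ u in t..(t+r), h u ≤ c₄ :=
      lintegral_to_interval h t (t+r) c₄ htt hc₄
        (hhcont.mono hsub) (fun u hu => hhnn u (hsub hu).1 (hsub hu).2)
        (le_trans (lintegral_mono_set hIoc) hhint)
    have := gronwall_window y y' h c₁ c₂ t (t+r) c₃ c₄ (by linarith) hc₁ hc₂ hc₄
      (hycont.mono hsub) (hhcont.mono hsub)
      (fun u hu => hynn u (hsub hu).1 (hsub hu).2)
      (fun u hu => hhnn u (hsub hu).1 (hsub hu).2)
      (fun u hu => hderiv u (hsub hu).1 (hsub hu).2)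
      (fun u hu => hineq u (hsub hu).1 (hsub hu).2)
      hyw hhw
    simpa [add_sub_cancel_left] using this
  · intro hT'
    subst hT'
    have hSeq : S = Set.Ici (0:ℝ) := by ext u; simp [hS]
    rw [hSeq] at hycont hhcont hyint hhint
    have hyfin : ∫⁻ t in Set.Ici (0:ℝ), ENNReal.ofReal (y t) ≠ ⊤ :=
      (lt_of_le_of_lt hyint ENNReal.ofReal_lt_top).ne
    have hhfin : ∫⁻ t in Set.Ici (0:ℝ), ENNReal.ofReal (h t) ≠ ⊤ :=
      (lt_of_le_of_lt hhint ENNReal.ofReal_lt_top).ne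
    rw [Metric.tendsto_atTop]
    intro ε hε
    set E : ℝ := Real.exp (c₁ * c₃) with hE
    have hE1 : 1 ≤ E := Real.one_le_exp (by positivity)
    have hEpos : 0 < E := lt_of_lt_of_le one_pos hE1
    set r : ℝ := min 1 (ε / (4 * (c₂ + 1) * E)) with hrdef
    have hrpos : 0 < r := lt_min one_pos (by positivity)
    have hc2r : c₂ * r * E ≤ ε / 4 := by
      have h1 : r ≤ ε / (4 * (c₂ + 1) * E) := min_le_right _ _
      have hQ : (c₂ + 1) * E * (ε / (4 * (c₂ + 1) * E)) = ε / 4 := by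
        field_simp
      nlinarith [mul_le_mul_of_nonneg_left h1 (by positivity : (0:ℝ) ≤ (c₂ + 1) * E),
        mul_le_mul_of_nonneg_left hrpos.le hc₂]
    have hδ₁ : (0:ℝ≥0∞) < ENNReal.ofReal (r * ε / (4 * E)) :=
      ENNReal.ofReal_pos.2 (by positivity)
    have hδ₂ : (0:ℝ≥0∞) < ENNReal.ofReal (ε / (4 * E)) :=
      ENNReal.ofReal_pos.2 (by positivity)
    obtain ⟨M₁, hM₁0, hM₁⟩ := tail_small (fun t => ENNReal.ofReal (y t)) hyfin _ hδ₁
    obtain ⟨M₂, hM₂0, hM₂⟩ := tail_small (fun t => ENNReal.ofReal (h t)) hhfin _ hδ₂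
    refine ⟨max M₁ M₂ + r, fun t htN => ?_⟩
    set a : ℝ := t - r with ha
    have haM1 : M₁ ≤ a := by
      have := le_max_left M₁ M₂
      simp only [ha]
      linarith
    have haM2 : M₂ ≤ a := by
      have := le_max_right M₁ M₂
      simp only [ha]
      linarith
    have ha0 : 0 ≤ a := le_trans hM₁0 haM1
    have hat : a < t := by simp only [ha]; linarith
    have hta : t - a = r := by simp only [ha]; ring
    have hsub : Set.Icc a t ⊆ S := by
      intro u hu
      rw [hS]
      exact ⟨le_trans ha0 hu.1, le_top⟩
    have hsubIoc1 : Set.Ioc a t ⊆ Set.Ici M₁ ∩ Set.Ici (0:ℝ) := fun u hu =>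
      ⟨le_trans haM1 hu.1.le, le_trans ha0 hu.1.le⟩
    have hsubIoc2 : Set.Ioc a t ⊆ Set.Ici M₂ ∩ Set.Ici (0:ℝ) := fun u hu =>
      ⟨le_trans haM2 hu.1.le, le_trans ha0 hu.1.le⟩
    have hA : ∫ u in a..t, y u ≤ min (r * ε / (4 * E)) c₃ := by
      refine le_min ?_ ?_
      · exact lintegral_to_interval y a t _ hat.le (by positivity)
          (hycont.mono (fun u hu => le_trans ha0 hu.1))
          (fun u hu => hynn u (le_trans ha0 hu.1) le_top)
          (le_trans (lintegral_mono_set hsubIoc1) hM₁.le)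
      · refine lintegral_to_interval y a t c₃ hat.le hc₃
          (hycont.mono (fun u hu => le_trans ha0 hu.1))
          (fun u hu => hynn u (le_trans ha0 hu.1) le_top) ?_
        refine le_trans (lintegral_mono_set ?_) hyint
        exact fun u hu => le_trans ha0 hu.1.le
    have hB : ∫ u in a..t, h u ≤ ε / (4 * E) :=
      lintegral_to_interval h a t _ hat.le (by positivity)
        (hhcont.mono (fun u hu => le_trans ha0 hu.1))
        (fun u hu => hhnn u (le_trans ha0 hu.1) le_top)
        (le_trans (lintegral_mono_set hsubIoc2) hM₂.le)
    have hwin := gronwall_window y y' h c₁ c₂ a t (min (r * ε / (4 * E)) c₃) (ε / (4 * E))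
      hat (hc₁) (hc₂) (by positivity)
      (hycont.mono (fun u hu => le_trans ha0 hu.1))
      (hhcont.mono (fun u hu => le_trans ha0 hu.1))
      (fun u hu => hynn u (le_trans ha0 hu.1) le_top)
      (fun u hu => hhnn u (le_trans ha0 hu.1) le_top)
      (fun u hu => hderiv u (le_trans ha0 hu.1) le_top)
      (fun u hu => hineq u (le_trans ha0 hu.1) le_top)
      hA hB
    rw [hta] at hwin
    have hAc₃ : min (r * ε / (4 * E)) c₃ ≤ c₃ := min_le_right _ _
    have hexp : Real.exp (c₁ * min (r * ε / (4 * E)) c₃) ≤ E :=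
      Real.exp_le_exp.2 (mul_le_mul_of_nonneg_left hAc₃ hc₁)
    have hdiv : min (r * ε / (4 * E)) c₃ / r ≤ ε / (4 * E) := by
      rw [div_le_iff₀ hrpos]
      calc min (r * ε / (4 * E)) c₃ ≤ r * ε / (4 * E) := min_le_left _ _
        _ = ε / (4 * E) * r := by ring
    have hfac : 0 ≤ min (r * ε / (4 * E)) c₃ / r + c₂ * r + ε / (4 * E) := by
      have h1 : 0 ≤ min (r * ε / (4 * E)) c₃ := le_min (by positivity) hc₃
      positivity
    have hyb : y t ≤ (ε / (4 * E) + c₂ * r + ε / (4 * E)) * E := by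
      refine le_trans hwin ?_
      refine mul_le_mul ?_ hexp (Real.exp_pos _).le ?_
      · linarith
      · linarith [hdiv, hfac]
    have hfrac : ε / (4 * E) * E = ε / 4 := by
      field_simp
    have hytnn : 0 ≤ y t := hynn t (by linarith [le_max_left M₁ M₂]) le_top
    rw [Real.dist_eq, sub_zero, abs_of_nonneg hytnn]
    nlinarith [hyb, hfrac, hc2r, hε]
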